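/- If n is odd and 3 ≤ n ≤ 2g−3, then I_Mac is generated, as an ideal of E, by the binomial(2g, n+1) Macdonald relations of weight n+1 with q = 0. -/

import Mathlib

noncomputable section

open Polynomial

/-- The free graded-commutative ring `E = Λ_ℤ⟨x₁,…,x_g,x'₁,…,x'_g⟩ ⊗ ℤ[y]`,
realized as the exterior algebra over `ℤ[y]` on a free module of rank `2g`. -/
abbrev E (g : ℕ) : Type :=
  ExteriorAlgebra (Polynomial ℤ) ((Fin g ⊕ Fin g) → Polynomial ℤ)

/-- The degree-one generator `x_i`. -/
def x (g : ℕ) (i : Fin g) : E g :=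
  ExteriorAlgebra.ι (Polynomial ℤ) (Pi.single (Sum.inl i) 1)

/-- The degree-one generator `x'_i`. -/
def x' (g : ℕ) (i : Fin g) : E g :=
  ExteriorAlgebra.ι (Polynomial ℤ) (Pi.single (Sum.inr i) 1)

/-- The degree-two polynomial generator `y`. -/
def y (g : ℕ) : E g :=
  algebraMap (Polynomial ℤ) (E g) Polynomial.X

/-- The Macdonald relation `x_{i₁}⋯x_{i_a}·x'_{j₁}⋯x'_{j_b}·(y−x_{k₁}x'_{k₁})⋯(y−x_{k_c}x'_{k_c})·y^q`
associated to lists of indices `I, J, K` and `q : ℕ`. -/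
def macRel (g : ℕ) (I J K : List (Fin g)) (q : ℕ) : E g :=
  (I.map (x g)).prod * (J.map (x' g)).prod *
    (K.map (fun k => y g - x g k * x' g k)).prod * (y g) ^ q

/-- The two-sided ideal `I_Mac` generated by all Macdonald relations of weight `n+1`. -/
def IMac (g n : ℕ) : TwoSidedIdeal (E g) :=
  TwoSidedIdeal.span {z : E g | ∃ (I J K : List (Fin g)) (q : ℕ),
    (I ++ J ++ K).Nodup ∧ I.length + J.length + 2 * K.length + q = n + 1 ∧
    z = macRel g I J K q}

/-- The monomial `x_A x'_B y^q`. -/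
def emonomial (g : ℕ) (A B : Finset (Fin g)) (q : ℕ) : E g :=
  ((A.sort (· ≤ ·)).map (x g)).prod * ((B.sort (· ≤ ·)).map (x' g)).prod * (y g) ^ q

/-- The degree-`s` homogeneous component `E^s`, the ℤ-span of the monomials of degree `s`. -/
def Ecomp (g s : ℕ) : Submodule ℤ (E g) :=
  Submodule.span ℤ {z : E g | ∃ (A B : Finset (Fin g)) (q : ℕ),
    A.card + B.card + 2 * q = s ∧ z = emonomial g A B q}

namespace MacAux

variable {g : ℕ}

/-- Central elements. -/
def IsC (c : E g) : Prop := ∀ a : E g, c * a = a * c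

lemma isC_y : IsC (y g) := fun a => Algebra.commutes _ a

lemma ι_swap (u v : (Fin g ⊕ Fin g) → Polynomial ℤ) :
    ExteriorAlgebra.ι (Polynomial ℤ) u * ExteriorAlgebra.ι (Polynomial ℤ) v
      = -(ExteriorAlgebra.ι (Polynomial ℤ) v * ExteriorAlgebra.ι (Polynomial ℤ) u) :=
  eq_neg_of_add_eq_zero_left (ExteriorAlgebra.ι_add_mul_swap u v)

lemma isC_pair (u v : (Fin g ⊕ Fin g) → Polynomial ℤ) :
    IsC (ExteriorAlgebra.ι (Polynomial ℤ) u * ExteriorAlgebra.ι (Polynomial ℤ) v) := by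
  intro a
  induction a using ExteriorAlgebra.induction with
  | algebraMap r => exact (Algebra.commutes r _).symm
  | ι w =>
      rw [mul_assoc, ι_swap v w, mul_neg, ← mul_assoc, ι_swap u w, neg_mul, neg_neg,
        mul_assoc]
  | mul a b ha hb => rw [← mul_assoc, ha, mul_assoc, hb, ← mul_assoc]
  | add a b ha hb => rw [mul_add, ha, hb, add_mul]

lemma isC_xx' (k : Fin g) : IsC (x g k * x' g k) := isC_pair _ _

lemma IsC.sub {c d : E g} (hc : IsC c) (hd : IsC d) : IsC (c - d) := fun a => by
  rw [sub_mul, mul_sub, hc, hd]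

lemma IsC.add {c d : E g} (hc : IsC c) (hd : IsC d) : IsC (c + d) := fun a => by
  rw [add_mul, mul_add, hc, hd]

lemma IsC.mul {c d : E g} (hc : IsC c) (hd : IsC d) : IsC (c * d) := fun a => by
  rw [mul_assoc, hd, ← mul_assoc, hc, mul_assoc]

lemma isC_ymxx' (k : Fin g) : IsC (y g - x g k * x' g k) := isC_y.sub (isC_xx' k)
lemma isC_ypxx' (k : Fin g) : IsC (y g + x g k * x' g k) := isC_y.add (isC_xx' k)

lemma isC_one : IsC (1 : E g) := fun a => by rw [one_mul, mul_one]

lemma isC_prodP (K : List (Fin g)) : IsC ((K.map (fun k => y g - x g k * x' g k)).prod) := by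
  induction K with
  | nil => simpa using isC_one
  | cons k K ih => simpa using (isC_ymxx' k).mul ih

lemma isC_prodQ (L : List (Fin g)) : IsC ((L.map (fun l => y g + x g l * x' g l)).prod) := by
  induction L with
  | nil => simpa using isC_one
  | cons k K ih => simpa using (isC_ypxx' k).mul ih

lemma isC_pow (q : ℕ) : IsC ((y g) ^ q) := by
  induction q with
  | zero => simpa using isC_one
  | succ q ih => rw [pow_succ]; exact ih.mul isC_y

lemma IsC.left_comm {c : E g} (hc : IsC c) (a b : E g) : a * (c * b) = c * (a * b) := by
  rw [← mul_assoc, ← hc, mul_assoc]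

end MacAux

namespace MacAux
variable {g : ℕ}

lemma key (w c : E g) (hc : IsC c) (hwc : w * c = w * y g)
    (A B : E g) (q : ℕ) :
    ((w * A) * B) * (y g ^ (q + 1)) = w * ((A * (B * c)) * y g ^ q) := by
  have hBc : B * c = c * B := (hc B).symm
  rw [hBc, hc.left_comm A B, mul_assoc c (A * B) (y g ^ q), ← mul_assoc w c _, hwc,
    mul_assoc w (y g) _, pow_succ, mul_assoc w A B, mul_assoc w (A * B) _,
    ← mul_assoc (A * B) (y g ^ q) (y g), ← isC_y ((A * B) * y g ^ q), mul_assoc]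

lemma xi_kill (i : Fin g) : x g i * (y g - x g i * x' g i) = x g i * y g := by
  rw [mul_sub, ← mul_assoc]
  unfold x
  rw [ExteriorAlgebra.ι_sq_zero, zero_mul, sub_zero]

lemma x'j_kill (j : Fin g) : x' g j * (y g - x g j * x' g j) = x' g j * y g := by
  rw [mul_sub, ← mul_assoc]
  have : x' g j * x g j = -(x g j * x' g j) := ι_swap _ _
  rw [this, neg_mul, mul_assoc]
  unfold x'
  rw [ExteriorAlgebra.ι_sq_zero, mul_zero, neg_zero, sub_zero]

lemma idI (i : Fin g) (I J K : List (Fin g)) (q : ℕ) :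
    macRel g (i :: I) J K (q + 1) = x g i * macRel g I J (K ++ [i]) q := by
  unfold macRel
  rw [List.map_cons, List.prod_cons, List.map_append, List.prod_append, List.map_cons,
    List.map_nil, List.prod_cons, List.prod_nil, mul_one,
    mul_assoc (x g i) ((I.map (x g)).prod) ((J.map (x' g)).prod)]
  exact key _ _ (isC_ymxx' i) (xi_kill i) _ _ q

lemma idJ (j : Fin g) (J K : List (Fin g)) (q : ℕ) :
    macRel g [] (j :: J) K (q + 1) = x' g j * macRel g [] J (K ++ [j]) q := by
  unfold macRel
  rw [List.map_nil, List.prod_nil, one_mul, one_mul, List.map_cons, List.prod_cons,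
    List.map_append, List.prod_append, List.map_cons, List.map_nil, List.prod_cons,
    List.prod_nil, mul_one]
  exact key _ _ (isC_ymxx' j) (x'j_kill j) _ _ q

lemma mac0_step (K : List (Fin g)) (k : Fin g) (m : ℕ) :
    macRel g [] [] (K ++ [k]) m * (y g + x g k * x' g k) = macRel g [] [] K (m + 2) := by
  unfold macRel
  simp only [List.map_nil, List.prod_nil, one_mul, List.map_append, List.prod_append,
    List.map_cons, List.prod_cons, mul_one]
  set P := (K.map (fun k => y g - x g k * x' g k)).prod with hP
  set z := x g k * x' g k with hz
  have hz2 : z * z = 0 := by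
    rw [hz]
    have h1 : x' g k * x g k = -(x g k * x' g k) := ι_swap _ _
    calc x g k * x' g k * (x g k * x' g k)
        = x g k * (x' g k * x g k * x' g k) := by rw [mul_assoc, ← mul_assoc (x' g k)]
      _ = 0 := by
          rw [h1, neg_mul, mul_assoc (x g k) (x' g k) (x' g k)]
          unfold x'
          rw [ExteriorAlgebra.ι_sq_zero, mul_zero, mul_neg, mul_zero, neg_zero]
  have hyz : (y g - z) * (y g + z) = y g * y g := by
    rw [sub_mul, mul_add, mul_add, hz2, add_zero, isC_xx' k (y g)]
    exact add_sub_cancel_right _ _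
  rw [mul_assoc P (y g - z) (y g ^ m), mul_assoc P _ _, mul_assoc (y g - z) (y g ^ m) _,
    isC_pow m (y g + z), ← mul_assoc (y g - z) (y g + z) (y g ^ m), hyz,
    ← pow_two, ← pow_add]
  have : 2 + m = m + 2 := by omega
  rw [this]

lemma pump (L : List (Fin g)) : ∀ K : List (Fin g),
    macRel g [] [] (K ++ L) 0 * (L.map (fun l => y g + x g l * x' g l)).prod
      = macRel g [] [] K (2 * L.length) := by
  induction L with
  | nil => intro K; simp
  | cons l L ih =>
      intro K
      rw [List.map_cons, List.prod_cons, show K ++ l :: L = (K ++ [l]) ++ L by simp,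
        isC_ypxx' l ((L.map (fun l => y g + x g l * x' g l)).prod), ← mul_assoc,
        ih (K ++ [l]), mac0_step]
      congr 1

end MacAux

namespace MacAux

lemma main_mem {g n : ℕ} (hodd : Odd n) (hle : n + 3 ≤ 2 * g) :
    ∀ (q : ℕ) (I J K : List (Fin g)), (I ++ J ++ K).Nodup →
      I.length + J.length + 2 * K.length + q = n + 1 →
      macRel g I J K q ∈ TwoSidedIdeal.span {z : E g | ∃ (I J K : List (Fin g)),
        (I ++ J ++ K).Nodup ∧ I.length + J.length + 2 * K.length = n + 1 ∧
        z = macRel g I J K 0} := by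
  intro q
  induction q with
  | zero =>
      intro I J K h1 h2
      exact TwoSidedIdeal.subset_span ⟨I, J, K, h1, by omega, rfl⟩
  | succ q ih =>
    intro I J K h1 h2
    match I with
    | i :: I' =>
        rw [idI]
        refine TwoSidedIdeal.mul_mem_left _ _ _ (ih I' J (K ++ [i]) ?_ ?_)
        · have h1' : (i :: (I' ++ J ++ K)).Nodup := by simpa using h1
          have hA : I' ++ J ++ (K ++ [i]) = (I' ++ J ++ K) ++ [i] := by
            simp [List.append_assoc]
          rw [hA]
          exact ((List.perm_append_singleton i (I' ++ J ++ K)).nodup_iff).mpr h1'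
        · simp only [List.length_append, List.length_cons, List.length_nil] at h2 ⊢
          omega
    | [] =>
      match J with
      | j :: J' =>
          rw [idJ]
          refine TwoSidedIdeal.mul_mem_left _ _ _ (ih [] J' (K ++ [j]) ?_ ?_)
          · have h1' : (j :: (J' ++ K)).Nodup := by simpa using h1
            have hA : ([] : List (Fin g)) ++ J' ++ (K ++ [j]) = (J' ++ K) ++ [j] := by
              simp [List.append_assoc]
            rw [hA]
            exact ((List.perm_append_singleton j (J' ++ K)).nodup_iff).mpr h1'
          · simp only [List.length_append, List.length_cons, List.length_nil] at h2 ⊢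
            omega
      | [] =>
          have hK : K.Nodup := by simpa using h1
          have h2' : 2 * K.length + (q + 1) = n + 1 := by
            simpa using h2
          obtain ⟨t, ht⟩ := hodd
          have hm : q + 1 = 2 * ((q + 1) / 2) := by omega
          set m := (q + 1) / 2 with hmdef
          have hcard : m ≤ (Finset.univ \ K.toFinset).card := by
            have hKc : K.toFinset.card = K.length := List.toFinset_card_of_nodup hK
            have h4 : (Finset.univ \ K.toFinset).card = g - K.length := by
              rw [Finset.card_sdiff_of_subset (Finset.subset_univ _), Finset.card_univ,
                Fintype.card_fin, hKc]
            omega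
          obtain ⟨tL, htsub, htcard⟩ := Finset.exists_subset_card_eq hcard
          set L := tL.toList with hLdef
          have hLlen : L.length = m := by
            rw [hLdef, Finset.length_toList, htcard]
          have hLnd : L.Nodup := tL.nodup_toList
          have hdisj : List.Disjoint K L := by
            intro a haK haL
            have haT : a ∈ Finset.univ \ K.toFinset := htsub (by
              simpa [hLdef, Finset.mem_toList] using haL)
            simp only [Finset.mem_sdiff, List.mem_toFinset] at haT
            exact haT.2 haK
          have hq : q + 1 = 2 * L.length := by omega
          rw [hq, ← pump L K]
          refine TwoSidedIdeal.mul_mem_right _ _ _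
            (TwoSidedIdeal.subset_span ⟨[], [], K ++ L, ?_, ?_, rfl⟩)
          · simp [List.nodup_append, hK, hLnd]
            intro a ha b hb hab
            exact hdisj ha (by subst hab; exact hb)
          · simp only [List.length_append, List.length_nil]
            omega

end MacAux

/-- If `n` is odd and `3 ≤ n ≤ 2g − 3`, then `I_Mac` is generated by the Macdonald relations
of weight `n+1` with `q = 0`. -/
theorem IMac_generated_by_q_zero_of_odd (g n : ℕ) (hg : 1 ≤ g) (hodd : Odd n)
    (h3 : 3 ≤ n) (h2g : n ≤ 2 * g - 3) :
    IMac g n = TwoSidedIdeal.span {z : E g | ∃ (I J K : List (Fin g)),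
      (I ++ J ++ K).Nodup ∧ I.length + J.length + 2 * K.length = n + 1 ∧
      z = macRel g I J K 0} := by
  have hle : n + 3 ≤ 2 * g := by omega
  apply le_antisymm
  · intro z hz
    refine TwoSidedIdeal.mem_span_iff.mp hz _ ?_
    rintro w ⟨I, J, K, q, h1, h2, rfl⟩
    exact MacAux.main_mem hodd hle q I J K h1 h2
  · intro z hz
    refine TwoSidedIdeal.mem_span_iff.mp hz _ ?_
    rintro w ⟨I, J, K, h1, h2, rfl⟩
    exact TwoSidedIdeal.subset_span ⟨I, J, K, 0, h1, by omega, rfl⟩
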